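/- Let M be a connected topological space with a Borel measure μ and let Ω : M × M → ℂ be continuous and satisfy propagator conditions (1)–(5). Let H_phy denote the range of the orthogonal projection P_Ω on L²(M, μ), viewed as a Hilbert space, and note that each coherent-state projection q_z maps H_phy into itself. If T is a bounded linear operator on H_phy commuting with the restriction of q_z to H_phy for every z ∈ M, then T is a scalar multiple of the identity. (Equivalently, the von Neumann algebra generated by {q_z|_{H_phy} : z ∈ M} is all of B(H_phy).) -/

import Mathlib

open MeasureTheory
open scoped InnerProductSpace ComplexConjugate

/-- With `Ω` a continuous propagator (conditions (1)–(5)) on a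
connected topological space with a Borel measure, `P` the associated orthogonal
projection on `L²(M,μ)` with range the physical Hilbert space `H_phy`, and `qz z` the
coherent-state projections (which map `H_phy` to itself): any bounded operator `T` on
`H_phy` (formalized as an operator on `L²` preserving the range of `P`) commuting with
all `qz z` on `H_phy` acts on `H_phy` as a scalar multiple of the identity; i.e. the
von Neumann algebra generated by the `qz z` is all of `B(H_phy)`. -/
theorem commutant_of_coherent_states_trivial
    {M : Type*} [TopologicalSpace M] [ConnectedSpace M]
    [MeasurableSpace M] [BorelSpace M]
    (μ : Measure M)
    (Ω : M → M → ℂ)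
    (hΩcont : Continuous fun p : M × M => Ω p.1 p.2)
    (h1 : ∀ x, Ω x x = 1)
    (h2 : ∀ x y, x ≠ y → ‖Ω x y‖ < 1)
    (h3 : ∀ x y, Ω x y = (starRingEnd ℂ) (Ω y x))
    (h4int : ∀ x y, Integrable (fun z => Ω x z * Ω z y) μ)
    (h4 : ∀ x y, ∫ z, Ω x z * Ω z y ∂μ = Ω x y)
    (h5 : ∃ C : ℝ, ∀ x, Integrable (fun y => ‖Ω x y‖) μ ∧ (∫ y, ‖Ω x y‖ ∂μ) ≤ C)
    (P : Lp ℂ 2 μ →L[ℂ] Lp ℂ 2 μ)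
    (hP : ∀ Ψ : Lp ℂ 2 μ, ∀ᵐ x ∂μ, (P Ψ) x = ∫ y, Ψ y * Ω y x ∂μ)
    (qz : M → (Lp ℂ 2 μ →L[ℂ] Lp ℂ 2 μ))
    (hqz : ∀ z, ∀ Ψ : Lp ℂ 2 μ, ∀ᵐ y ∂μ,
      (qz z Ψ) y = (∫ w, Ψ w * Ω w z ∂μ) * Ω z y)
    (T : Lp ℂ 2 μ →L[ℂ] Lp ℂ 2 μ)
    (hT_maps : ∀ ψ, ψ ∈ LinearMap.range (P : Lp ℂ 2 μ →ₗ[ℂ] Lp ℂ 2 μ) → T ψ ∈ LinearMap.range (P : Lp ℂ 2 μ →ₗ[ℂ] Lp ℂ 2 μ))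
    (hT_comm : ∀ z : M, ∀ ψ ∈ LinearMap.range (P : Lp ℂ 2 μ →ₗ[ℂ] Lp ℂ 2 μ), T (qz z ψ) = qz z (T ψ)) :
    ∃ c : ℂ, ∀ ψ ∈ LinearMap.range (P : Lp ℂ 2 μ →ₗ[ℂ] Lp ℂ 2 μ), T ψ = c • ψ := by
  classical
  -- the coherent states belong to L²
  have hmem : ∀ x : M, MemLp (fun y => Ω x y) 2 μ := by
    intro x
    have hcont : Continuous fun y => Ω x y := hΩcont.comp (Continuous.prodMk_right x)
    have hmeas : AEStronglyMeasurable (fun y => Ω x y) μ := hcont.aestronglyMeasurable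
    rw [memLp_two_iff_integrable_sq_norm hmeas]
    have hi := h4int x x
    have heq : (fun z => Ω x z * Ω z x) = fun z => ((‖Ω x z‖ ^ 2 : ℝ) : ℂ) := by
      funext z
      rw [h3 z x]
      exact_mod_cast Complex.mul_conj' (Ω x z)
    rw [heq] at hi
    have h' := hi.re
    exact h'.congr (ae_of_all _ fun z => Complex.ofReal_re _)
  set e : M → Lp ℂ 2 μ := fun x => (hmem x).toLp _ with he
  have hecoe : ∀ x, (e x : Lp ℂ 2 μ) =ᵐ[μ] fun y => Ω x y := fun x => (hmem x).coeFn_toLp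
  -- inner products against coherent states
  have hinner : ∀ (x : M) (Ψ : Lp ℂ 2 μ), ⟪e x, Ψ⟫_ℂ = ∫ y, Ψ y * Ω y x ∂μ := by
    intro x Ψ
    rw [L2.inner_def]
    apply integral_congr_ae
    filter_upwards [hecoe x] with y hy
    simp only [RCLike.inner_apply]
    rw [hy, h3 y x]
  have hee : ∀ z w : M, ⟪e z, e w⟫_ℂ = Ω w z := by
    intro z w
    rw [hinner]
    have : ∫ y, (e w) y * Ω y z ∂μ = ∫ y, Ω w y * Ω y z ∂μ := by
      apply integral_congr_ae
      filter_upwards [hecoe w] with y hy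
      rw [hy]
    rw [this, h4]
  have hez : ∀ z, e z ≠ 0 := by
    intro z hz
    have h0 : ⟪e z, e z⟫_ℂ = 0 := by rw [hz]; simp
    rw [hee, h1] at h0
    exact one_ne_zero h0
  -- the coherent-state projections
  have hq : ∀ (z : M) (Ψ : Lp ℂ 2 μ), qz z Ψ = (⟪e z, Ψ⟫_ℂ) • e z := by
    intro z Ψ
    apply Lp.ext
    filter_upwards [hqz z Ψ, Lp.coeFn_smul (⟪e z, Ψ⟫_ℂ) (e z), hecoe z] with y hy hy2 hy3
    rw [hy, hy2, Pi.smul_apply, hy3, hinner, smul_eq_mul]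
  -- P fixes coherent states
  have hPe : ∀ z, P (e z) = e z := by
    intro z
    apply Lp.ext
    filter_upwards [hP (e z), hecoe z] with x hx hx'
    rw [hx, hx']
    have : ∫ y, (e z) y * Ω y x ∂μ = ∫ y, Ω z y * Ω y x ∂μ := by
      apply integral_congr_ae
      filter_upwards [hecoe z] with y hy
      rw [hy]
    rw [this, h4]
  -- the closed span of the coherent states
  set W : Submodule ℂ (Lp ℂ 2 μ) := Submodule.span ℂ (Set.range e) with hW
  set V : Submodule ℂ (Lp ℂ 2 μ) := W.topologicalClosure with hV
  have heV : ∀ x, e x ∈ V :=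
    fun x => W.le_topologicalClosure (Submodule.subset_span (Set.mem_range_self x))
  have hfix : ∀ v ∈ V, P v = v := by
    have hker : V ≤ LinearMap.ker ((P - ContinuousLinearMap.id ℂ (Lp ℂ 2 μ) : Lp ℂ 2 μ →L[ℂ] Lp ℂ 2 μ) : Lp ℂ 2 μ →ₗ[ℂ] Lp ℂ 2 μ) := by
      apply Submodule.topologicalClosure_minimal
      · rw [Submodule.span_le]
        rintro _ ⟨z, rfl⟩
        simp only [ContinuousLinearMap.coe_coe, SetLike.mem_coe, LinearMap.mem_ker, ContinuousLinearMap.coe_sub',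
          Pi.sub_apply, ContinuousLinearMap.coe_id', id_eq]
        rw [hPe z, sub_self]
      · exact ContinuousLinearMap.isClosed_ker _
    intro v hv
    have := hker hv
    simp only [ContinuousLinearMap.coe_coe, LinearMap.mem_ker, ContinuousLinearMap.coe_sub', Pi.sub_apply,
      ContinuousLinearMap.coe_id', id_eq] at this
    exact sub_eq_zero.mp this
  -- range of P lands in V
  haveI : CompleteSpace V := W.isClosed_topologicalClosure.completeSpace_coe
  have hrange : ∀ Ψ : Lp ℂ 2 μ, P Ψ ∈ V := by
    intro Ψ
    set v : Lp ℂ 2 μ := (V.orthogonalProjectionOnto Ψ : Lp ℂ 2 μ) with hv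
    have hu : Ψ - v ∈ Vᗮ := V.sub_starProjection_mem_orthogonal Ψ
    have hPΨ : P Ψ = P v := by
      apply Lp.ext
      filter_upwards [hP Ψ, hP v] with x hx hx'
      rw [hx, hx', ← hinner, ← hinner]
      have h0 : ⟪e x, Ψ - v⟫_ℂ = 0 :=
        (Submodule.mem_orthogonal V (Ψ - v)).mp hu (e x) (heV x)
      rw [inner_sub_right] at h0
      linear_combination h0
    rw [hPΨ, hfix v (V.orthogonalProjectionOnto Ψ).2]
    exact (V.orthogonalProjectionOnto Ψ).2
  -- coherent states are eigenvectors of T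
  have hmemP : ∀ z, e z ∈ LinearMap.range (P : Lp ℂ 2 μ →ₗ[ℂ] Lp ℂ 2 μ) := fun z => ⟨e z, hPe z⟩
  have hTe : ∀ z, T (e z) = (⟪e z, T (e z)⟫_ℂ) • e z := by
    intro z
    have h1' : qz z (e z) = e z := by rw [hq, hee, h1, one_smul]
    have hc := hT_comm z (e z) (hmemP z)
    rw [h1'] at hc
    calc T (e z) = qz z (T (e z)) := hc
      _ = (⟪e z, T (e z)⟫_ℂ) • e z := hq z _
  have hloc : ∀ z w : M, Ω w z ≠ 0 →
      (⟪e w, T (e w)⟫_ℂ) = ⟪e z, T (e z)⟫_ℂ := by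
    intro z w hne
    have hqw : qz z (e w) = Ω w z • e z := by rw [hq, hee]
    have hcomm := hT_comm z (e w) (hmemP w)
    have l1 : T (qz z (e w)) = (Ω w z * ⟪e z, T (e z)⟫_ℂ) • e z := by
      rw [hqw, ContinuousLinearMap.map_smul]
      conv_lhs => rw [hTe z]
      rw [smul_smul]
    have l2 : qz z (T (e w)) = ((⟪e w, T (e w)⟫_ℂ) * Ω w z) • e z := by
      conv_lhs => rw [hTe w]
      rw [ContinuousLinearMap.map_smul, hqw, smul_smul]
    have key := l1.symm.trans (hcomm.trans l2)
    have key2 : Ω w z * ⟪e z, T (e z)⟫_ℂ = (⟪e w, T (e w)⟫_ℂ) * Ω w z :=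
      smul_left_injective ℂ (hez z) key
    rw [mul_comm (⟪e w, T (e w)⟫_ℂ) (Ω w z)] at key2
    exact (mul_left_cancel₀ hne key2).symm
  have hlc : IsLocallyConstant (fun z => ⟪e z, T (e z)⟫_ℂ) := by
    rw [IsLocallyConstant.iff_exists_open]
    intro z
    refine ⟨{w | Ω w z ≠ 0}, ?_, by simp [h1 z], fun w hw => hloc z w hw⟩
    have hcz : Continuous fun w => Ω w z :=
      hΩcont.comp (continuous_id.prodMk continuous_const)
    exact isOpen_compl_singleton.preimage hcz
  have z0 : M := Classical.arbitrary M
  have hconst : ∀ z, (⟪e z, T (e z)⟫_ℂ) = ⟪e z0, T (e z0)⟫_ℂ := by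
    intro z
    have := hlc.eq_const z0
    exact congrFun this z
  refine ⟨⟪e z0, T (e z0)⟫_ℂ, ?_⟩
  rintro ψ hψ
  have hψV : ψ ∈ V := by obtain ⟨Ψ, rfl⟩ := hψ; exact hrange Ψ
  set φ : Lp ℂ 2 μ := T ψ - (⟪e z0, T (e z0)⟫_ℂ) • ψ with hφ
  have hφV : φ ∈ V := by
    have hT' : T ψ ∈ V := by
      obtain ⟨Ψ', hΨ'⟩ := hT_maps ψ hψ
      rw [← hΨ']; exact hrange Ψ'
    exact V.sub_mem hT' (V.smul_mem _ hψV)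
  have hφorth : ∀ z, ⟪e z, φ⟫_ℂ = 0 := by
    intro z
    have hq0 : qz z φ = 0 := by
      have hc := hT_comm z ψ hψ
      have e1 : qz z ψ = (⟪e z, ψ⟫_ℂ) • e z := hq z ψ
      have l1 : qz z φ = qz z (T ψ) - (⟪e z0, T (e z0)⟫_ℂ) • qz z ψ := by
        rw [hφ, map_sub, ContinuousLinearMap.map_smul]
      rw [l1, ← hc, e1, ContinuousLinearMap.map_smul, hTe z, hconst z,
        smul_comm (⟪e z, ψ⟫_ℂ) (⟪e z0, T (e z0)⟫_ℂ) (e z), sub_self]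
    have := (hq z φ).symm.trans hq0
    rcases smul_eq_zero.mp this with h | h
    · exact h
    · exact absurd h (hez z)
  have hWorth : ∀ w ∈ W, ⟪w, φ⟫_ℂ = 0 := by
    intro w hw
    induction hw using Submodule.span_induction with
    | mem x hx => obtain ⟨z, rfl⟩ := hx; exact hφorth z
    | zero => simp
    | add x y _ _ hx hy => rw [inner_add_left, hx, hy, add_zero]
    | smul c x _ hx => rw [inner_smul_left, hx, mul_zero]
  have hinner0 : ⟪φ, φ⟫_ℂ = 0 := by
    have hcont : Continuous fun ξ : Lp ℂ 2 μ => ⟪ξ, φ⟫_ℂ :=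
      continuous_id.inner continuous_const
    have hcl : IsClosed {ξ : Lp ℂ 2 μ | ⟪ξ, φ⟫_ℂ = 0} :=
      isClosed_eq hcont continuous_const
    have hsub : (W : Set (Lp ℂ 2 μ)) ⊆ {ξ | ⟪ξ, φ⟫_ℂ = 0} := fun w hw => hWorth w hw
    have hmemcl : φ ∈ closure (W : Set (Lp ℂ 2 μ)) := hφV
    exact closure_minimal hsub hcl hmemcl
  have hφ0 : φ = 0 := inner_self_eq_zero.mp hinner0
  have := sub_eq_zero.mp hφ0
  exact this
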